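/- Fix n ≥ 1 and let ℓ be an index with n ≤ ℓ < n(n+1)/2, corresponding to the pair (i, j), and set d = j − i. Then G_ℓ is a normal subgroup of U_n(K), and for every u ∈ U_n(K) and g ∈ G_ℓ the commutator u·g·u^{-1}·g^{-1} lies in G_{ℓ'}, where ℓ' is the index of the pair (0, d+1) if d + 1 ≤ n − 1 and ℓ' = n(n+1)/2 otherwise; in particular the commutator lies in G_{ℓ+1}, so G_ℓ is central in U_n(K) modulo G_{ℓ+1}. -/

import Mathlib

namespace ValPaper

/-- The index of the pair `(i, j)` (with `i ≤ j < n`) when such pairs are ordered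
first by `j - i` and then by `i`. -/
def pairIndex (n i j : ℕ) : ℕ := (j - i) * n - (j - i) * ((j - i) - 1) / 2 + i

private lemma aux_even (d : ℕ) : 2 * (d * (d - 1) / 2) = d * (d - 1) := by
  have h : 2 ∣ d * (d - 1) := by
    rcases Nat.even_or_odd d with h2 | h2
    · exact Dvd.dvd.mul_right h2.two_dvd _
    · exact Dvd.dvd.mul_left (Nat.Odd.sub_odd h2 odd_one).two_dvd _
  omega

private lemma F_step (n d : ℕ) (hdn : d ≤ n) :
    pairIndex n 0 (d + 1) = pairIndex n 0 d + (n - d) := by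
  have h1 := aux_even d
  have h2 := aux_even (d + 1)
  have h3 : (d + 1) * ((d + 1) - 1) = d * (d - 1) + 2 * d := by
    cases d with
    | zero => simp
    | succ m => simp only [Nat.add_sub_cancel]; ring
  have h4 : d * (d - 1) ≤ 2 * (d * n) := by
    calc d * (d - 1) ≤ d * (2 * n) := Nat.mul_le_mul_left d (by omega)
    _ = 2 * (d * n) := by ring
  have h5 : (d + 1) * n = d * n + n := by ring
  simp only [pairIndex, Nat.sub_zero, Nat.add_sub_cancel] at *
  set A := d * n
  set B := d * (d - 1)
  set C := (d + 1) * n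
  set D := (d + 1) * d
  omega

private lemma F_mono (n : ℕ) : ∀ e d : ℕ, d ≤ e → e ≤ n → pairIndex n 0 d ≤ pairIndex n 0 e := by
  intro e
  induction e with
  | zero => intro d h _; have : d = 0 := by omega
            subst this; exact le_rfl
  | succ m ih =>
    intro d hde hen
    rcases Nat.lt_succ_iff_lt_or_eq.mp (Nat.lt_succ_of_le hde) with h | h
    · have h1 := ih d (by omega) (by omega)
      have h2 := F_step n m (by omega)
      omega
    · subst h; exact le_rfl

private lemma F_gap (n d e : ℕ) (hde : d < e) (he : e ≤ n) :
    pairIndex n 0 d + (n - d) ≤ pairIndex n 0 e := by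
  have h1 := F_step n d (by omega)
  have h2 := F_mono n e (d + 1) hde he
  omega

private lemma pairIndex_split (n p q : ℕ) : pairIndex n p q = pairIndex n 0 (q - p) + p := by
  simp [pairIndex]

private lemma pairIndex_lt_iff (n p q p' q' : ℕ) (h1 : p ≤ q) (h2 : q < n)
    (h3 : p' ≤ q') (h4 : q' < n) :
    pairIndex n p q < pairIndex n p' q' ↔
      (q - p < q' - p' ∨ (q - p = q' - p' ∧ p < p')) := by
  rw [pairIndex_split n p q, pairIndex_split n p' q']
  rcases lt_trichotomy (q - p) (q' - p') with h | h | h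
  · have hg := F_gap n (q - p) (q' - p') h (by omega)
    have hp : p < n - (q - p) := by omega
    generalize pairIndex n 0 (q - p) = A at hg ⊢
    generalize pairIndex n 0 (q' - p') = B at hg ⊢
    omega
  · rw [h]
    generalize pairIndex n 0 (q' - p') = A
    omega
  · have hg := F_gap n (q' - p') (q - p) h (by omega)
    have hp : p' < n - (q' - p') := by omega
    generalize pairIndex n 0 (q - p) = A at hg ⊢
    generalize pairIndex n 0 (q' - p') = B at hg ⊢
    omega

private def SS (d i p q : ℕ) : Prop := p + d ≤ q ∧ (q = p + d → i ≤ p)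

section Mat
variable {K : Type*} [Field K] {n : ℕ}

private lemma supp_left_mul (d i : ℕ) (U M : Matrix (Fin n) (Fin n) K)
    (hU : U.BlockTriangular id)
    (hM : ∀ p q : Fin n, ¬ SS d i p q → M p q = 0) :
    ∀ p q : Fin n, ¬ SS d i p q → (U * M) p q = 0 := by
  intro p q hpq
  rw [Matrix.mul_apply]
  apply Finset.sum_eq_zero
  intro k _
  by_cases h1 : SS d i (k : ℕ) (q : ℕ)
  · have hk : (k : ℕ) < (p : ℕ) := by simp only [SS] at h1 hpq; omega
    rw [hU (show (id k : Fin n) < id p from hk), zero_mul]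
  · rw [hM k q h1, mul_zero]

private lemma supp_right_mul (d i : ℕ) (U M : Matrix (Fin n) (Fin n) K)
    (hU : U.BlockTriangular id)
    (hM : ∀ p q : Fin n, ¬ SS d i p q → M p q = 0) :
    ∀ p q : Fin n, ¬ SS d i p q → (M * U) p q = 0 := by
  intro p q hpq
  rw [Matrix.mul_apply]
  apply Finset.sum_eq_zero
  intro k _
  by_cases h1 : SS d i (p : ℕ) (k : ℕ)
  · have hk : (q : ℕ) < (k : ℕ) := by simp only [SS] at h1 hpq; omega
    rw [hU (show (id q : Fin n) < id k from hk), mul_zero]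
  · rw [hM p k h1, zero_mul]

private lemma diag_mul_left (d i : ℕ) (U M : Matrix (Fin n) (Fin n) K)
    (hU : U.BlockTriangular id) (hU1 : ∀ p, U p p = 1)
    (hM : ∀ p q : Fin n, ¬ SS d i p q → M p q = 0) :
    ∀ p q : Fin n, (q : ℕ) ≤ (p : ℕ) + d → (U * M) p q = M p q := by
  intro p q hq
  rw [Matrix.mul_apply]
  rw [Finset.sum_eq_single p]
  · rw [hU1, one_mul]
  · intro k _ hk
    rcases Nat.lt_trichotomy (k : ℕ) (p : ℕ) with h | h | h
    · rw [hU (show (id k : Fin n) < id p from h), zero_mul]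
    · exact absurd (Fin.ext h) hk
    · rw [hM k q (by simp only [SS]; omega), mul_zero]
  · intro h; exact absurd (Finset.mem_univ p) h

private lemma diag_mul_right (d i : ℕ) (U M : Matrix (Fin n) (Fin n) K)
    (hU : U.BlockTriangular id) (hU1 : ∀ p, U p p = 1)
    (hM : ∀ p q : Fin n, ¬ SS d i p q → M p q = 0) :
    ∀ p q : Fin n, (q : ℕ) ≤ (p : ℕ) + d → (M * U) p q = M p q := by
  intro p q hq
  rw [Matrix.mul_apply]
  rw [Finset.sum_eq_single q]
  · rw [hU1, mul_one]
  · intro k _ hk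
    rcases Nat.lt_trichotomy (k : ℕ) (q : ℕ) with h | h | h
    · rw [hM p k (by simp only [SS]; omega), zero_mul]
    · exact absurd (Fin.ext h) hk
    · rw [hU (show (id q : Fin n) < id k from h), mul_zero]
  · intro h; exact absurd (Finset.mem_univ q) h

end Mat

/-- for `n ≤ ℓ < n(n+1)/2` with corresponding pair `(i, j)` and
`d = j - i`, the subgroup `G_ℓ` is normal in `U_n(K)` and commutators of elements
of `U_n(K)` with elements of `G_ℓ` lie in `G_{ℓ'}` (where `ℓ'` is the index of
the pair `(0, d+1)` if `d + 1 ≤ n - 1`, and `ℓ' = n(n+1)/2` otherwise); in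
particular they lie in `G_{ℓ+1}`, so `G_ℓ` is central in `U_n(K)` modulo `G_{ℓ+1}`. -/
theorem unipotent_central_filtration (K : Type*) [Field K] (n : ℕ) (hn : 1 ≤ n)
    (Uni : Set (Matrix (Fin n) (Fin n) K)ˣ)
    (hU : Uni = {a : (Matrix (Fin n) (Fin n) K)ˣ |
      (a : Matrix (Fin n) (Fin n) K).BlockTriangular id ∧
        ∀ i, (a : Matrix (Fin n) (Fin n) K) i i = 1})
    (G : ℕ → Set (Matrix (Fin n) (Fin n) K)ˣ)
    (hG : ∀ ℓ, G ℓ = {a : (Matrix (Fin n) (Fin n) K)ˣ |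
      (a : Matrix (Fin n) (Fin n) K).BlockTriangular id ∧
      ∀ i j : Fin n, (i : ℕ) ≤ (j : ℕ) → pairIndex n i j < ℓ →
        (a : Matrix (Fin n) (Fin n) K) i j = if i = j then 1 else 0})
    (ℓ : ℕ) (hℓn : n ≤ ℓ) (hℓT : ℓ < n * (n+1) / 2)
    (i j : Fin n) (hij : (i : ℕ) ≤ (j : ℕ)) (hpair : pairIndex n i j = ℓ)
    (d : ℕ) (hd : d = (j : ℕ) - (i : ℕ))
    (ℓ' : ℕ) (hℓ' : ℓ' = if d + 1 ≤ n - 1 then pairIndex n 0 (d+1) else n * (n+1) / 2) :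
    (G ℓ ⊆ Uni ∧ ∀ u ∈ Uni, ∀ g ∈ G ℓ, u * g * u⁻¹ ∈ G ℓ) ∧
    (∀ u ∈ Uni, ∀ g ∈ G ℓ, u * g * u⁻¹ * g⁻¹ ∈ G ℓ') ∧
    (∀ u ∈ Uni, ∀ g ∈ G ℓ, u * g * u⁻¹ * g⁻¹ ∈ G (ℓ+1)) := by
  have hjn : (j : ℕ) < n := j.isLt
  have hin : (i : ℕ) < n := i.isLt
  -- d ≥ 1
  have hd1 : 1 ≤ d := by
    by_contra h
    have hji : (j : ℕ) - (i : ℕ) = 0 := by omega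
    have : pairIndex n i j = (i : ℕ) := by simp [pairIndex, hji]
    omega
  have hdn : d < n := by omega
  have hsplit : ℓ = pairIndex n 0 d + (i : ℕ) := by
    rw [← hpair, pairIndex_split n i j, ← hd]
  have hij_lt : (i : ℕ) < n - d := by omega
  have hstep : pairIndex n 0 (d + 1) = pairIndex n 0 d + (n - d) := F_step n d (by omega)
  -- membership criterion
  have memG : ∀ (D I m : ℕ), 1 ≤ D →
      (∀ p q : Fin n, (p : ℕ) ≤ (q : ℕ) → pairIndex n p q < m → ¬ SS D I p q) →
      ∀ (a : (Matrix (Fin n) (Fin n) K)ˣ) (X : Matrix (Fin n) (Fin n) K),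
        (↑a : Matrix (Fin n) (Fin n) K) = 1 + X →
        (∀ p q : Fin n, ¬ SS D I (p : ℕ) (q : ℕ) → X p q = 0) → a ∈ G m := by
    intro D I m hD htr a X hX hsupp
    rw [hG]
    refine ⟨?_, ?_⟩
    · intro p q hlt
      have hqp : (q : ℕ) < (p : ℕ) := hlt
      have hx := hsupp p q (by simp only [SS]; omega)
      rw [hX, Matrix.add_apply, hx, Matrix.one_apply_ne (by exact Fin.ne_of_gt hlt), add_zero]
    · intro p q hpq hm'
      have hx := hsupp p q (htr p q hpq hm')
      rw [hX, Matrix.add_apply, hx, add_zero, Matrix.one_apply]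
  -- decomposition of elements of G ℓ
  have gdecomp : ∀ g ∈ G ℓ,
      ((↑g : Matrix (Fin n) (Fin n) K)).BlockTriangular id ∧
      (∀ p q : Fin n, ¬ SS d (i : ℕ) (p : ℕ) (q : ℕ) →
        ((↑g : Matrix (Fin n) (Fin n) K) - 1) p q = 0) := by
    intro g hg
    rw [hG] at hg
    obtain ⟨htri, hent⟩ := hg
    refine ⟨htri, ?_⟩
    intro p q hS
    rcases le_or_gt (p : ℕ) (q : ℕ) with hle | hlt
    · have hpl : pairIndex n p q < ℓ := by
        rw [← hpair, pairIndex_lt_iff n p q i j hle q.isLt hij hjn]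
        simp only [SS] at hS; omega
      have := hent p q hle hpl
      rw [Matrix.sub_apply, this, Matrix.one_apply]
      by_cases h : p = q <;> simp [h]
    · have h1 : (↑g : Matrix (Fin n) (Fin n) K) p q = 0 :=
        htri (show (id q : Fin n) < id p from hlt)
      have h2 : (1 : Matrix (Fin n) (Fin n) K) p q = 0 :=
        Matrix.one_apply_ne (Fin.ne_of_gt hlt)
      rw [Matrix.sub_apply, h1, h2, sub_zero]
  -- translations
  have tr1 : ∀ p q : Fin n, (p : ℕ) ≤ (q : ℕ) → pairIndex n p q < ℓ →
      ¬ SS d (i : ℕ) (p : ℕ) (q : ℕ) := by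
    intro p q hle hm
    rw [← hpair, pairIndex_lt_iff n p q i j hle q.isLt hij hjn] at hm
    simp only [SS]; omega
  have tr2 : ∀ p q : Fin n, (p : ℕ) ≤ (q : ℕ) → pairIndex n p q < ℓ' →
      ¬ SS (d + 1) 0 (p : ℕ) (q : ℕ) := by
    intro p q hle hm
    simp only [SS]
    by_cases hcase : d + 1 ≤ n - 1
    · rw [hℓ', if_pos hcase] at hm
      by_contra hcon
      have hmono := F_mono n ((q : ℕ) - (p : ℕ)) (d + 1) (by omega) (by omega)
      have hsp := pairIndex_split n (p : ℕ) (q : ℕ)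
      generalize pairIndex n 0 ((q : ℕ) - (p : ℕ)) = A at hmono hsp
      generalize pairIndex n 0 (d + 1) = B at hmono hm
      generalize pairIndex n (p : ℕ) (q : ℕ) = E at hsp hm
      omega
    · have := q.isLt
      omega
  have tr3 : ∀ p q : Fin n, (p : ℕ) ≤ (q : ℕ) → pairIndex n p q < ℓ + 1 →
      ¬ SS (d + 1) 0 (p : ℕ) (q : ℕ) := by
    intro p q hle hm
    simp only [SS]
    by_contra hcon
    have hmono := F_mono n ((q : ℕ) - (p : ℕ)) (d + 1) (by omega) (by omega)
    have hsp := pairIndex_split n (p : ℕ) (q : ℕ)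
    generalize pairIndex n 0 ((q : ℕ) - (p : ℕ)) = A at hmono hsp
    generalize pairIndex n 0 (d + 1) = B at hmono hstep
    generalize pairIndex n (p : ℕ) (q : ℕ) = E at hsp hm
    generalize pairIndex n 0 d = F at hstep hsplit
    omega
  -- the commutator lemma, generic in the target level
  have comm : ∀ u ∈ Uni, ∀ g ∈ G ℓ, ∀ m : ℕ,
      (∀ p q : Fin n, (p : ℕ) ≤ (q : ℕ) → pairIndex n p q < m →
        ¬ SS (d + 1) 0 (p : ℕ) (q : ℕ)) →
      u * g * u⁻¹ * g⁻¹ ∈ G m := by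
    intro u hu g hg m htr
    rw [hU] at hu
    obtain ⟨hutri, hudiag⟩ := hu
    obtain ⟨hgtri, hgsupp⟩ := gdecomp g hg
    have hVtri : ((↑(u⁻¹) : Matrix (Fin n) (Fin n) K)).BlockTriangular id := by
      obtain ⟨inst⟩ := (Units.isUnit u).nonempty_invertible
      rw [Matrix.coe_units_inv]
      exact Matrix.blockTriangular_inv_of_blockTriangular hutri
    have hWtri : ((↑(g⁻¹) : Matrix (Fin n) (Fin n) K)).BlockTriangular id := by
      obtain ⟨inst⟩ := (Units.isUnit g).nonempty_invertible
      rw [Matrix.coe_units_inv]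
      exact Matrix.blockTriangular_inv_of_blockTriangular hgtri
    set U : Matrix (Fin n) (Fin n) K := ↑u with hUdef
    set V : Matrix (Fin n) (Fin n) K := ↑(u⁻¹) with hVdef
    set Gm : Matrix (Fin n) (Fin n) K := ↑g with hGmdef
    set W : Matrix (Fin n) (Fin n) K := ↑(g⁻¹) with hWdef
    set M : Matrix (Fin n) (Fin n) K := Gm - 1 with hMdef
    have hGm1 : Gm = 1 + M := by rw [hMdef]; abel
    have hVW : (V * W).BlockTriangular id := hVtri.mul hWtri
    have e1 : (Gm * U) * (V * W) = 1 := by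
      have h0 : (g * u) * (u⁻¹ * g⁻¹) = 1 := by group
      calc (Gm * U) * (V * W) = (↑((g * u) * (u⁻¹ * g⁻¹)) : Matrix (Fin n) (Fin n) K) := by
            rw [Units.val_mul, Units.val_mul, Units.val_mul]
      _ = 1 := by rw [h0, Units.val_one]
    have e2 : (U * Gm) * (V * W) = (↑(u * g * u⁻¹ * g⁻¹) : Matrix (Fin n) (Fin n) K) := by
      rw [Units.val_mul, Units.val_mul, Units.val_mul]
      simp only [mul_assoc]
      rfl
    have hdecomp2 : (↑(u * g * u⁻¹ * g⁻¹) : Matrix (Fin n) (Fin n) K)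
        = 1 + (U * Gm - Gm * U) * (V * W) := by
      rw [sub_mul, e1, e2]; abel
    apply memG (d + 1) 0 m (by omega) htr _ _ hdecomp2
    -- support of (U*Gm - Gm*U) * (V*W)
    have hXsupp : ∀ p q : Fin n, ¬ SS (d + 1) 0 (p : ℕ) (q : ℕ) →
        (U * Gm - Gm * U) p q = 0 := by
      intro p q hS
      have hq : (q : ℕ) ≤ (p : ℕ) + d := by simp only [SS] at hS; omega
      have c1 := diag_mul_left d (i : ℕ) U M hutri hudiag hgsupp p q hq
      have c2 := diag_mul_right d (i : ℕ) U M hutri hudiag hgsupp p q hq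
      rw [Matrix.sub_apply, hGm1, mul_add, mul_one, add_mul, one_mul,
        Matrix.add_apply, Matrix.add_apply, c1, c2]
      ring
    exact supp_right_mul (d + 1) 0 (V * W) _ hVW hXsupp
  refine ⟨⟨?_, ?_⟩, ?_, ?_⟩
  · -- G ℓ ⊆ Uni
    intro a ha
    rw [hG] at ha
    obtain ⟨htri, hent⟩ := ha
    rw [hU]
    refine ⟨htri, fun p => ?_⟩
    have hpp : pairIndex n p p = (p : ℕ) := by simp [pairIndex]
    have hplt : pairIndex n p p < ℓ := by rw [hpp]; have := p.isLt; omega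
    simpa using hent p p le_rfl hplt
  · -- normality
    intro u hu g hg
    rw [hU] at hu
    obtain ⟨hutri, hudiag⟩ := hu
    obtain ⟨hgtri, hgsupp⟩ := gdecomp g hg
    have hVtri : ((↑(u⁻¹) : Matrix (Fin n) (Fin n) K)).BlockTriangular id := by
      obtain ⟨inst⟩ := (Units.isUnit u).nonempty_invertible
      rw [Matrix.coe_units_inv]
      exact Matrix.blockTriangular_inv_of_blockTriangular hutri
    set U : Matrix (Fin n) (Fin n) K := ↑u with hUdef
    set V : Matrix (Fin n) (Fin n) K := ↑(u⁻¹) with hVdef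
    set Gm : Matrix (Fin n) (Fin n) K := ↑g with hGmdef
    set M : Matrix (Fin n) (Fin n) K := Gm - 1 with hMdef
    have hGm1 : Gm = 1 + M := by rw [hMdef]; abel
    have hUV : U * V = 1 := by
      rw [hUdef, hVdef, ← Units.val_mul, mul_inv_cancel, Units.val_one]
    have hdecomp : (↑(u * g * u⁻¹) : Matrix (Fin n) (Fin n) K) = 1 + U * M * V := by
      have h1 : (↑(u * g * u⁻¹) : Matrix (Fin n) (Fin n) K) = U * Gm * V := by
        rw [Units.val_mul, Units.val_mul]
      rw [h1, hGm1, mul_add, mul_one, add_mul, hUV]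
    apply memG d (i : ℕ) ℓ hd1 tr1 _ _ hdecomp
    have s1 := supp_left_mul d (i : ℕ) U M hutri hgsupp
    exact supp_right_mul d (i : ℕ) V (U * M) hVtri s1
  · intro u hu g hg
    exact comm u hu g hg ℓ' tr2
  · intro u hu g hg
    exact comm u hu g hg (ℓ + 1) tr3

end ValPaper
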